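/- For every clustering C of V and every vertex u ∈ V, Σ_{v ∈ V} d̂_uv = Σ_{v ∈ N_u^+} d_uv + Σ_{v ∈ N_u^-} (1 − d_uv) ≤ 8 · max_{z ∈ V} y_C(z). In particular, Σ_{v ∈ V} d̂_uv ≤ 8 · OPT for every u ∈ V. -/

import Mathlib

open Finset

set_option maxHeartbeats 1600000

/-- Positive neighborhood of `u`. -/
def Np {V : Type*} [Fintype V] (pos : V → V → Bool) (u : V) : Finset V :=
  Finset.univ.filter (fun v => pos u v)

/-- Negative neighborhood of `u`. -/
def Nm {V : Type*} [Fintype V] (pos : V → V → Bool) (u : V) : Finset V :=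
  Finset.univ.filter (fun v => ¬ pos u v)

/-- The correlation metric. -/
noncomputable def corrDist {V : Type*} [Fintype V] [DecidableEq V]
    (pos : V → V → Bool) (u v : V) : ℝ :=
  1 - ((Np pos u ∩ Np pos v).card : ℝ) /
      ((Fintype.card V : ℝ) - ((Nm pos u ∩ Nm pos v).card : ℝ))

/-- Number of disagreements incident to `u` under the clustering `C`. -/
def yC {V : Type*} [Fintype V] [DecidableEq V] (pos : V → V → Bool) (C : V → ℕ) (u : V) : ℕ :=
  (Finset.univ.filter (fun v => v ≠ u ∧
    ((pos u v ∧ C u ≠ C v) ∨ (¬ (pos u v) ∧ C u = C v)))).card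

/-- Optimal value of the Min Max correlation clustering objective. -/
noncomputable def OPT {V : Type*} [Fintype V] [DecidableEq V] (pos : V → V → Bool) : ℕ :=
  sInf { k : ℕ | ∃ C : V → ℕ, k = Finset.univ.sup (yC pos C) }

/-- `d̂`. -/
noncomputable def dhat {V : Type*} [Fintype V] [DecidableEq V]
    (pos : V → V → Bool) (u v : V) : ℝ :=
  if pos u v then corrDist pos u v else 1 - corrDist pos u v

/-- number of samples. -/
noncomputable def mSample (V : Type*) [Fintype V] (ε : ℝ) : ℕ :=
  ⌈(32 / ε ^ 2) * Real.log (Fintype.card V)⌉₊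

/-- Sample space: one subset of `N_u^+` of size `min m |N_u^+|` per vertex `u`. -/
abbrev SampleSpace {V : Type*} [Fintype V] [DecidableEq V]
    (pos : V → V → Bool) (m : ℕ) : Type _ :=
  ∀ u : V, {s : Finset V // s ⊆ Np pos u ∧ s.card = min m (Np pos u).card}

/-- Uniform probability of an event over a finite sample space. -/
noncomputable def prob {Ω : Type*} [Fintype Ω] (E : Set Ω) : ℝ :=
  (E.ncard : ℝ) / (Fintype.card Ω : ℝ)

noncomputable def West {V : Type*} [Fintype V] [DecidableEq V]
    (pos : V → V → Bool) {m : ℕ} (ω : SampleSpace pos m) (u v : V) : ℝ :=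
  if m ≤ (Np pos u).card then
    ((Np pos u).card : ℝ) / m * (((ω u).1 ∩ Np pos v).card : ℝ)
  else ((Np pos u ∩ Np pos v).card : ℝ)

noncomputable def Yest {V : Type*} [Fintype V] [DecidableEq V]
    (pos : V → V → Bool) {m : ℕ} (ω : SampleSpace pos m) (u v : V) : ℝ :=
  if m ≤ (Np pos u).card then
    ((Np pos u).card : ℝ) / m * (((ω u).1 ∩ Nm pos v).card : ℝ)
  else ((Np pos u ∩ Nm pos v).card : ℝ)

/-- Initial estimate of the correlation metric for a pair labeled with `|N_v^+| ≥ |N_u^+|`. -/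
noncomputable def dbar {V : Type*} [Fintype V] [DecidableEq V]
    (pos : V → V → Bool) {m : ℕ} (ω : SampleSpace pos m) (u v : V) : ℝ :=
  (Yest pos ω u v + Yest pos ω v u) / (((Np pos u).card : ℝ) + Yest pos ω v u)

/-- Initial estimate, with the pair relabeled so the vertex with larger
positive neighborhood comes second. -/
noncomputable def dbarS {V : Type*} [Fintype V] [DecidableEq V]
    (pos : V → V → Bool) {m : ℕ} (ω : SampleSpace pos m) (u v : V) : ℝ :=
  if (Np pos u).card ≤ (Np pos v).card then dbar pos ω u v else dbar pos ω v u

noncomputable def cc1 (ε : ℝ) : ℝ := (1 + ε) / (1 - ε)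
noncomputable def hh1 (ε : ℝ) : ℝ := 2 * ε / (1 - ε)
noncomputable def cc2 (ε : ℝ) : ℝ := (1 + ε) / (1 - ε)
noncomputable def hh2 (ε : ℝ) : ℝ := 2 * ε / (1 - ε)
noncomputable def cc3 (ε : ℝ) : ℝ := ((1 + ε) / (1 - ε)) ^ 2
noncomputable def hh3 (ε : ℝ) : ℝ := (2 * ε / (1 - ε)) * (1 + 2 * (1 + ε) / (1 - ε))
noncomputable def cc4 (ε : ℝ) : ℝ := (2 * cc3 ε + 1) * cc3 ε
noncomputable def hh4 (ε : ℝ) : ℝ := (4 * cc3 ε + 1) * (2 * cc3 ε + 1) * hh3 ε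
noncomputable def DD (ε : ℝ) : ℝ := 2 * cc3 ε

/-- Post-processed estimate. -/
noncomputable def dtilde {V : Type*} [Fintype V] [DecidableEq V] (ε : ℝ)
    (pos : V → V → Bool) {m : ℕ} (ω : SampleSpace pos m) (u v : V) : ℝ :=
  if pos u v ∧ dbarS pos ω u v ≤ 2 * hh3 ε then 0
  else if ¬ (pos u v) ∧ 1 / (2 * cc3 ε + 1) ≤ dbarS pos ω u v then 1
  else dbarS pos ω u v

/-- The radius `r(δ₁, δ₂)` from Appendix B. -/
noncomputable def rr (δ1 δ2 : ℝ) : ℝ :=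
  (1 - δ2 - δ1 * δ2 - δ1 ^ 2 * δ2 - δ1 ^ 3 * δ2) /
    (δ1 ^ 2 + δ1 ^ 3 * (δ1 + 1) + δ1 + 1)

noncomputable def c1const (δ1 δ2 : ℝ) : ℝ := δ1 + δ2 / rr δ1 δ2
noncomputable def bconst (δ1 δ2 : ℝ) : ℝ := (c1const δ1 δ2 + 1) * δ1 + δ2 / rr δ1 δ2
noncomputable def c2const (δ1 δ2 : ℝ) : ℝ := δ1 * (bconst δ1 δ2 + 1) + δ2 / rr δ1 δ2


section AuxFC

variable {V : Type*} [Fintype V] [DecidableEq V]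

lemma mem_Np_iff (pos : V → V → Bool) (u v : V) : v ∈ Np pos u ↔ pos u v = true := by
  simp [Np]

/-- The set of disagreement partners of `w`. -/
def disSet (pos : V → V → Bool) (C : V → ℕ) (w : V) : Finset V :=
  Finset.univ.filter (fun v => v ≠ w ∧
    ((pos w v ∧ C w ≠ C v) ∨ (¬ (pos w v) ∧ C w = C v)))

lemma yC_eq_card (pos : V → V → Bool) (C : V → ℕ) (w : V) :
    yC pos C w = (disSet pos C w).card := rfl

lemma mem_disSet {pos : V → V → Bool} {C : V → ℕ} {w v : V} :
    v ∈ disSet pos C w ↔ v ≠ w ∧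
      ((pos w v = true ∧ C w ≠ C v) ∨ (¬ (pos w v = true) ∧ C w = C v)) := by
  simp [disSet]

lemma denom_eq (pos : V → V → Bool) (u v : V) :
    (Fintype.card V : ℝ) - ((Nm pos u ∩ Nm pos v).card : ℝ)
      = ((Np pos u ∪ Np pos v).card : ℝ) := by
  have h : Nm pos u ∩ Nm pos v = (Np pos u ∪ Np pos v)ᶜ := by
    ext x
    simp [Np, Nm]
  rw [h, Finset.card_compl]
  have hle := Finset.card_le_univ (Np pos u ∪ Np pos v)
  rw [Nat.cast_sub hle]
  simp

lemma corrDist_eq (pos : V → V → Bool) (u v : V) :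
    corrDist pos u v
      = 1 - ((Np pos u ∩ Np pos v).card : ℝ) / ((Np pos u ∪ Np pos v).card : ℝ) := by
  rw [corrDist, denom_eq]

lemma card_union_decomp (A B : Finset V) :
    (A ∪ B).card = (A \ B).card + (B \ A).card + (A ∩ B).card := by
  have h1 := Finset.card_union_add_card_inter A B
  have h2 := Finset.card_sdiff_add_card_inter A B
  have h3 := Finset.card_sdiff_add_card_inter B A
  rw [Finset.inter_comm B A] at h3
  omega

lemma symmdiff_le_yC (pos : V → V → Bool) (hsymm : ∀ u v, pos u v = pos v u)
    (hrefl : ∀ u, pos u u = true) (C : V → ℕ) (u v : V)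
    (hpos : pos u v = true) (hC : C v = C u) :
    (Np pos u \ Np pos v).card + (Np pos v \ Np pos u).card
      ≤ yC pos C u + yC pos C v := by
  have hsub : (Np pos u \ Np pos v) ∪ (Np pos v \ Np pos u)
      ⊆ disSet pos C u ∪ disSet pos C v := by
    intro w hw
    rw [Finset.mem_union] at hw ⊢
    rcases hw with hw | hw
    · rw [Finset.mem_sdiff, mem_Np_iff, mem_Np_iff] at hw
      obtain ⟨huw, hvw⟩ := hw
      have hwu : w ≠ u := by
        rintro rfl
        exact hvw (by rw [hsymm]; exact hpos)
      have hwv : w ≠ v := by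
        rintro rfl
        exact hvw (hrefl w)
      by_cases hCw : C u = C w
      · right
        rw [mem_disSet]
        exact ⟨hwv, Or.inr ⟨hvw, by rw [hC]; exact hCw⟩⟩
      · left
        rw [mem_disSet]
        exact ⟨hwu, Or.inl ⟨huw, hCw⟩⟩
    · rw [Finset.mem_sdiff, mem_Np_iff, mem_Np_iff] at hw
      obtain ⟨hvw, huw⟩ := hw
      have hwu : w ≠ u := by
        rintro rfl
        exact huw (hrefl w)
      have hwv : w ≠ v := by
        rintro rfl
        exact huw hpos
      by_cases hCw : C u = C w
      · left
        rw [mem_disSet]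
        exact ⟨hwu, Or.inr ⟨huw, hCw⟩⟩
      · right
        rw [mem_disSet]
        refine ⟨hwv, Or.inl ⟨hvw, ?_⟩⟩
        rw [hC]; exact hCw
  have hdisj : Disjoint (Np pos u \ Np pos v) (Np pos v \ Np pos u) :=
    disjoint_sdiff_sdiff
  calc (Np pos u \ Np pos v).card + (Np pos v \ Np pos u).card
      = ((Np pos u \ Np pos v) ∪ (Np pos v \ Np pos u)).card :=
        (Finset.card_union_of_disjoint hdisj).symm
    _ ≤ (disSet pos C u ∪ disSet pos C v).card := Finset.card_le_card hsub
    _ ≤ (disSet pos C u).card + (disSet pos C v).card := Finset.card_union_le _ _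
    _ = yC pos C u + yC pos C v := by rw [yC_eq_card, yC_eq_card]

lemma cluster_card_le (pos : V → V → Bool) (hrefl : ∀ u, pos u u = true)
    (C : V → ℕ) (v w : V) (hv : C v = C w) :
    (Finset.univ.filter (fun x => C x = C w)).card
      ≤ (Np pos v).card + yC pos C v := by
  have hsub : Finset.univ.filter (fun x => C x = C w) ⊆ Np pos v ∪ disSet pos C v := by
    intro x hx
    rw [Finset.mem_filter] at hx
    rw [Finset.mem_union]
    by_cases hp : pos v x = true
    · left; rw [mem_Np_iff]; exact hp
    · right
      rw [mem_disSet]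
      refine ⟨?_, Or.inr ⟨hp, by rw [hv, hx.2]⟩⟩
      rintro rfl
      exact hp (hrefl x)
  calc (Finset.univ.filter (fun x => C x = C w)).card
      ≤ (Np pos v ∪ disSet pos C v).card := Finset.card_le_card hsub
    _ ≤ (Np pos v).card + (disSet pos C v).card := Finset.card_union_le _ _
    _ = (Np pos v).card + yC pos C v := by rw [yC_eq_card]

lemma main_bound (pos : V → V → Bool)
    (hsymm : ∀ u v, pos u v = pos v u) (hrefl : ∀ u, pos u u = true)
    (u : V) (C : V → ℕ) :
    (∑ v, dhat pos u v) ≤ 8 * ((Finset.univ.sup (yC pos C) : ℕ) : ℝ) := by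
  classical
  set M : ℝ := ((Finset.univ.sup (yC pos C) : ℕ) : ℝ) with hMdef
  have hyM : ∀ w : V, ((yC pos C w : ℕ) : ℝ) ≤ M := fun w =>
    Nat.cast_le.mpr (Finset.le_sup (Finset.mem_univ w))
  have hM0 : (0:ℝ) ≤ M := Nat.cast_nonneg _
  set p : ℝ := ((Np pos u).card : ℝ) with hpdef
  have hup : u ∈ Np pos u := (mem_Np_iff pos u u).mpr (hrefl u)
  have hp : 0 < p := by
    rw [hpdef]
    exact_mod_cast Finset.card_pos.mpr ⟨u, hup⟩
  have hple : ∀ v : V, p ≤ ((Np pos u ∪ Np pos v).card : ℝ) := by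
    intro v
    rw [hpdef]
    exact_mod_cast Finset.card_le_card
      (Finset.subset_union_left : Np pos u ⊆ Np pos u ∪ Np pos v)
  have hUpos : ∀ v : V, (0:ℝ) < ((Np pos u ∪ Np pos v).card : ℝ) :=
    fun v => lt_of_lt_of_le hp (hple v)
  have hPvle : ∀ v : V, ((Np pos v).card : ℝ) ≤ ((Np pos u ∪ Np pos v).card : ℝ) := by
    intro v
    exact_mod_cast Finset.card_le_card
      (Finset.subset_union_right : Np pos v ⊆ Np pos u ∪ Np pos v)
  have hone_sub : ∀ v : V, 1 - corrDist pos u v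
      = ((Np pos u ∩ Np pos v).card : ℝ) / ((Np pos u ∪ Np pos v).card : ℝ) := by
    intro v; rw [corrDist_eq]; ring
  set A1 := (Np pos u).filter (fun v => ¬ C v = C u) with hA1
  set A3 := (Np pos u).filter (fun v => C v = C u) with hA3
  set A2 := (Nm pos u).filter (fun v => C v = C u) with hA2
  set A4 := (Nm pos u).filter (fun v => ¬ C v = C u) with hA4
  have hNp : Finset.univ.filter (fun v => pos u v = true) = Np pos u := by
    ext x; simp [Np]
  have hNm : Finset.univ.filter (fun v => ¬ pos u v = true) = Nm pos u := by
    ext x; simp [Nm]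
  have hdpos : ∀ v ∈ Np pos u, dhat pos u v = corrDist pos u v := by
    intro v hv
    rw [mem_Np_iff] at hv
    simp [dhat, hv]
  have hdneg : ∀ v ∈ Nm pos u, dhat pos u v = 1 - corrDist pos u v := by
    intro v hv
    have h : ¬ pos u v = true := by simpa [Nm] using hv
    simp [dhat, h]
  have hsplit : ∑ v, dhat pos u v
      = ((∑ v ∈ A3, corrDist pos u v) + (∑ v ∈ A1, corrDist pos u v))
        + ((∑ v ∈ A2, (1 - corrDist pos u v)) + (∑ v ∈ A4, (1 - corrDist pos u v))) := by
    rw [← Finset.sum_filter_add_sum_filter_not Finset.univ (fun v => pos u v = true)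
      (dhat pos u), hNp, hNm,
      ← Finset.sum_filter_add_sum_filter_not (Np pos u) (fun v => C v = C u) (dhat pos u),
      ← Finset.sum_filter_add_sum_filter_not (Nm pos u) (fun v => C v = C u) (dhat pos u)]
    congr 1
    · congr 1
      · exact Finset.sum_congr rfl fun v hv => hdpos v (Finset.mem_filter.mp hv).1
      · exact Finset.sum_congr rfl fun v hv => hdpos v (Finset.mem_filter.mp hv).1
    · congr 1
      · exact Finset.sum_congr rfl fun v hv => hdneg v (Finset.mem_filter.mp hv).1
      · exact Finset.sum_congr rfl fun v hv => hdneg v (Finset.mem_filter.mp hv).1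
  -- Bound 1 : positive cross-cluster edges
  have hb1 : (∑ v ∈ A1, corrDist pos u v) ≤ M := by
    have hsub1 : A1 ⊆ disSet pos C u := by
      intro v hv
      rw [hA1, Finset.mem_filter, mem_Np_iff] at hv
      obtain ⟨hv1, hv2⟩ := hv
      rw [mem_disSet]
      exact ⟨fun h => hv2 (by rw [h]), Or.inl ⟨hv1, fun h => hv2 h.symm⟩⟩
    have h1 : ∀ v ∈ A1, corrDist pos u v ≤ 1 := by
      intro v _
      rw [corrDist_eq]
      have h0 : (0:ℝ) ≤ ((Np pos u ∩ Np pos v).card : ℝ) / ((Np pos u ∪ Np pos v).card : ℝ) :=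
        div_nonneg (Nat.cast_nonneg _) (Nat.cast_nonneg _)
      linarith
    calc (∑ v ∈ A1, corrDist pos u v) ≤ A1.card • (1:ℝ) :=
          Finset.sum_le_card_nsmul _ _ _ h1
      _ = (A1.card : ℝ) := by simp
      _ ≤ ((yC pos C u : ℕ) : ℝ) := by
          rw [yC_eq_card]
          exact_mod_cast Finset.card_le_card hsub1
      _ ≤ M := hyM u
  -- Bound 2 : negative intra-cluster edges
  have hb2 : (∑ v ∈ A2, (1 - corrDist pos u v)) ≤ M := by
    have hsub2 : A2 ⊆ disSet pos C u := by
      intro v hv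
      rw [hA2, Finset.mem_filter] at hv
      obtain ⟨hv1, hv2⟩ := hv
      have hneg : ¬ pos u v = true := by simpa [Nm] using hv1
      rw [mem_disSet]
      refine ⟨?_, Or.inr ⟨hneg, hv2.symm⟩⟩
      intro h
      rw [h] at hneg
      exact hneg (hrefl u)
    have h1 : ∀ v ∈ A2, 1 - corrDist pos u v ≤ 1 := by
      intro v _
      rw [hone_sub]
      rw [div_le_one (hUpos v)]
      exact_mod_cast Finset.card_le_card (Finset.inter_subset_union)
    calc (∑ v ∈ A2, (1 - corrDist pos u v)) ≤ A2.card • (1:ℝ) :=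
          Finset.sum_le_card_nsmul _ _ _ h1
      _ = (A2.card : ℝ) := by simp
      _ ≤ ((yC pos C u : ℕ) : ℝ) := by
          rw [yC_eq_card]
          exact_mod_cast Finset.card_le_card hsub2
      _ ≤ M := hyM u
  -- Bound 3 : positive intra-cluster edges
  have hb3 : (∑ v ∈ A3, corrDist pos u v) ≤ 2 * M := by
    have hterm : ∀ v ∈ A3, corrDist pos u v ≤ 2 * M / p := by
      intro v hv
      rw [hA3, Finset.mem_filter, mem_Np_iff] at hv
      obtain ⟨hv1, hv2⟩ := hv
      have hnum : ((Np pos u ∪ Np pos v).card : ℝ) - ((Np pos u ∩ Np pos v).card : ℝ)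
          ≤ 2 * M := by
        have h := symmdiff_le_yC pos hsymm hrefl C u v hv1 hv2
        have hd := card_union_decomp (Np pos u) (Np pos v)
        have h2 : ((Np pos u ∪ Np pos v).card : ℝ) - ((Np pos u ∩ Np pos v).card : ℝ)
            = (((Np pos u \ Np pos v).card + (Np pos v \ Np pos u).card : ℕ) : ℝ) := by
          rw [hd]; push_cast; ring
        rw [h2]
        have h3 : (((Np pos u \ Np pos v).card + (Np pos v \ Np pos u).card : ℕ) : ℝ)
            ≤ ((yC pos C u + yC pos C v : ℕ) : ℝ) := Nat.cast_le.mpr h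
        have h4 := hyM u
        have h5 := hyM v
        push_cast at h3 ⊢
        linarith
      have e1 : corrDist pos u v
          = (((Np pos u ∪ Np pos v).card : ℝ) - ((Np pos u ∩ Np pos v).card : ℝ))
            / ((Np pos u ∪ Np pos v).card : ℝ) := by
        rw [corrDist_eq, sub_div, div_self (ne_of_gt (hUpos v))]
      rw [e1]
      exact div_le_div₀ (by linarith) hnum hp (hple v)
    calc (∑ v ∈ A3, corrDist pos u v) ≤ A3.card • (2 * M / p) :=
          Finset.sum_le_card_nsmul _ _ _ hterm
      _ = (A3.card : ℝ) * (2 * M / p) := nsmul_eq_mul _ _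
      _ ≤ p * (2 * M / p) := by
          apply mul_le_mul_of_nonneg_right _ (by positivity)
          rw [hpdef]
          exact_mod_cast Finset.card_le_card (Finset.filter_subset _ _)
      _ = 2 * M := by field_simp
  -- Bound 4 : negative cross-cluster edges
  have hA4mem : ∀ v ∈ A4, ¬ pos u v = true ∧ ¬ C v = C u := by
    intro v hv
    rw [hA4, Finset.mem_filter] at hv
    exact ⟨by simpa [Nm] using hv.1, hv.2⟩
  have hb4 : (∑ v ∈ A4, (1 - corrDist pos u v)) ≤ 3 * M := by
    have hexp : ∀ v : V, 1 - corrDist pos u v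
        = (∑ w ∈ Np pos u,
            (if w ∈ Np pos v ∧ ¬ C w = C v then 1 / ((Np pos u ∪ Np pos v).card : ℝ) else 0))
          + (∑ w ∈ Np pos u,
            (if w ∈ Np pos v ∧ C w = C v then 1 / ((Np pos u ∪ Np pos v).card : ℝ) else 0)) := by
      intro v
      rw [← Finset.sum_add_distrib]
      have hpt : ∀ w ∈ Np pos u,
          ((if w ∈ Np pos v ∧ ¬ C w = C v then 1 / ((Np pos u ∪ Np pos v).card : ℝ) else 0)
            + (if w ∈ Np pos v ∧ C w = C v then 1 / ((Np pos u ∪ Np pos v).card : ℝ) else 0))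
          = (if w ∈ Np pos v then 1 / ((Np pos u ∪ Np pos v).card : ℝ) else 0) := by
        intro w _
        by_cases h1 : w ∈ Np pos v <;> by_cases h2 : C w = C v <;> simp [h1, h2]
      rw [Finset.sum_congr rfl hpt, Finset.sum_ite_mem, Finset.sum_const, nsmul_eq_mul,
        mul_one_div, hone_sub v]
    have hS : ∑ v ∈ A4, (1 - corrDist pos u v)
        = (∑ w ∈ Np pos u, ∑ v ∈ A4,
            (if w ∈ Np pos v ∧ ¬ C w = C v then 1 / ((Np pos u ∪ Np pos v).card : ℝ) else 0))
          + (∑ w ∈ Np pos u, ∑ v ∈ A4,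
            (if w ∈ Np pos v ∧ C w = C v then 1 / ((Np pos u ∪ Np pos v).card : ℝ) else 0)) := by
      rw [Finset.sum_congr rfl fun v _ => hexp v, Finset.sum_add_distrib]
      congr 1
      · exact Finset.sum_comm
      · exact Finset.sum_comm
    -- Part A
    have hin1 : ∀ w ∈ Np pos u, (∑ v ∈ A4,
        (if w ∈ Np pos v ∧ ¬ C w = C v then 1 / ((Np pos u ∪ Np pos v).card : ℝ) else 0))
        ≤ M / p := by
      intro w hw
      have hptw : ∀ v ∈ A4,
          (if w ∈ Np pos v ∧ ¬ C w = C v then 1 / ((Np pos u ∪ Np pos v).card : ℝ) else 0)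
          ≤ (if v ∈ disSet pos C w then 1 / p else 0) := by
        intro v hv
        by_cases hc : w ∈ Np pos v ∧ ¬ C w = C v
        · have hmem : v ∈ disSet pos C w := by
            rw [mem_disSet]
            obtain ⟨hwv, hcwv⟩ := hc
            rw [mem_Np_iff] at hwv
            have huv := (hA4mem v hv).1
            have hvw : v ≠ w := by
              rintro rfl
              rw [mem_Np_iff] at hw
              exact huv hw
            exact ⟨hvw, Or.inl ⟨by rw [hsymm]; exact hwv, hcwv⟩⟩
          rw [if_pos hc, if_pos hmem]
          exact one_div_le_one_div_of_le hp (hple v)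
        · rw [if_neg hc]
          split
          · positivity
          · exact le_refl 0
      calc (∑ v ∈ A4,
          (if w ∈ Np pos v ∧ ¬ C w = C v then 1 / ((Np pos u ∪ Np pos v).card : ℝ) else 0))
          ≤ ∑ v ∈ A4, (if v ∈ disSet pos C w then 1 / p else 0) := Finset.sum_le_sum hptw
        _ ≤ ∑ v ∈ Finset.univ, (if v ∈ disSet pos C w then 1 / p else 0) :=
            Finset.sum_le_sum_of_subset_of_nonneg (Finset.subset_univ _)
              (fun v _ _ => by split <;> positivity)
        _ = ((disSet pos C w).card : ℝ) * (1 / p) := by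
            rw [Finset.sum_ite_mem, Finset.univ_inter, Finset.sum_const, nsmul_eq_mul]
        _ ≤ M * (1 / p) := by
            apply mul_le_mul_of_nonneg_right _ (by positivity)
            rw [← yC_eq_card]
            exact hyM w
        _ = M / p := by ring
    have hS1 : (∑ w ∈ Np pos u, ∑ v ∈ A4,
        (if w ∈ Np pos v ∧ ¬ C w = C v then 1 / ((Np pos u ∪ Np pos v).card : ℝ) else 0))
        ≤ M := by
      calc _ ≤ (Np pos u).card • (M / p) := Finset.sum_le_card_nsmul _ _ _ hin1
        _ = p * (M / p) := by rw [nsmul_eq_mul, ← hpdef]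
        _ = M := by field_simp
    -- Part B
    set Wb := (Np pos u).filter (fun w => ¬ C w = C u) with hWbdef
    have hzero : ∀ w ∈ (Np pos u).filter (fun w => C w = C u),
        (∑ v ∈ A4,
          (if w ∈ Np pos v ∧ C w = C v then 1 / ((Np pos u ∪ Np pos v).card : ℝ) else 0)) = 0 := by
      intro w hw
      rw [Finset.mem_filter] at hw
      apply Finset.sum_eq_zero
      intro v hv
      rw [if_neg]
      rintro ⟨-, hcv⟩
      exact (hA4mem v hv).2 (by rw [← hcv, hw.2])
    have hsplitW : (∑ w ∈ Np pos u, ∑ v ∈ A4,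
        (if w ∈ Np pos v ∧ C w = C v then 1 / ((Np pos u ∪ Np pos v).card : ℝ) else 0))
        = ∑ w ∈ Wb, ∑ v ∈ A4,
          (if w ∈ Np pos v ∧ C w = C v then 1 / ((Np pos u ∪ Np pos v).card : ℝ) else 0) := by
      rw [← Finset.sum_filter_add_sum_filter_not (Np pos u) (fun w => C w = C u)
        (fun w => ∑ v ∈ A4,
          (if w ∈ Np pos v ∧ C w = C v then 1 / ((Np pos u ∪ Np pos v).card : ℝ) else 0)),
        Finset.sum_congr rfl hzero]
      simp [hWbdef]
    have hinner : ∀ w ∈ Wb, (∑ v ∈ A4,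
        (if w ∈ Np pos v ∧ C w = C v then 1 / ((Np pos u ∪ Np pos v).card : ℝ) else 0))
        ≤ max 2 (2 * M / p) := by
      intro w hw
      set L := Finset.univ.filter (fun x => C x = C w) with hLdef
      have hmemL : ∀ v : V, C v = C w → v ∈ L := by
        intro v hv
        rw [hLdef, Finset.mem_filter]
        exact ⟨Finset.mem_univ v, hv⟩
      by_cases hl : (L.card : ℝ) ≤ 2 * M
      · -- small cluster
        have hpt : ∀ v ∈ A4,
            (if w ∈ Np pos v ∧ C w = C v then 1 / ((Np pos u ∪ Np pos v).card : ℝ) else 0)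
            ≤ (if v ∈ L then 1 / p else 0) := by
          intro v _
          by_cases hc : w ∈ Np pos v ∧ C w = C v
          · rw [if_pos hc, if_pos (hmemL v hc.2.symm)]
            exact one_div_le_one_div_of_le hp (hple v)
          · rw [if_neg hc]
            split
            · positivity
            · exact le_refl 0
        calc (∑ v ∈ A4,
            (if w ∈ Np pos v ∧ C w = C v then 1 / ((Np pos u ∪ Np pos v).card : ℝ) else 0))
            ≤ ∑ v ∈ A4, (if v ∈ L then 1 / p else 0) := Finset.sum_le_sum hpt
          _ ≤ ∑ v ∈ Finset.univ, (if v ∈ L then 1 / p else 0) :=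
              Finset.sum_le_sum_of_subset_of_nonneg (Finset.subset_univ _)
                (fun v _ _ => by split <;> positivity)
          _ = (L.card : ℝ) * (1 / p) := by
              rw [Finset.sum_ite_mem, Finset.univ_inter, Finset.sum_const, nsmul_eq_mul]
          _ ≤ 2 * M * (1 / p) := mul_le_mul_of_nonneg_right hl (by positivity)
          _ = 2 * M / p := by ring
          _ ≤ max 2 (2 * M / p) := le_max_right _ _
      · -- big cluster
        push_neg at hl
        have hl0 : (0:ℝ) < (L.card : ℝ) := by
          have : (0:ℝ) ≤ 2 * M := by linarith
          linarith
        have hpt : ∀ v ∈ A4,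
            (if w ∈ Np pos v ∧ C w = C v then 1 / ((Np pos u ∪ Np pos v).card : ℝ) else 0)
            ≤ (if v ∈ L then 2 / (L.card : ℝ) else 0) := by
          intro v _
          by_cases hc : w ∈ Np pos v ∧ C w = C v
          · rw [if_pos hc, if_pos (hmemL v hc.2.symm)]
            have h1 : L.card ≤ (Np pos v).card + yC pos C v :=
              cluster_card_le pos hrefl C v w hc.2.symm
            have h4 : (L.card : ℝ) ≤ ((Np pos v).card : ℝ) + ((yC pos C v : ℕ) : ℝ) := by
              exact_mod_cast h1
            have h2 : (L.card : ℝ) - M ≤ ((Np pos u ∪ Np pos v).card : ℝ) := by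
              have h5 := hyM v
              have h3 := hPvle v
              linarith
            have h5 : (L.card : ℝ) / 2 ≤ ((Np pos u ∪ Np pos v).card : ℝ) := by linarith
            have h6 : (0:ℝ) < (L.card : ℝ) / 2 := by linarith
            calc 1 / ((Np pos u ∪ Np pos v).card : ℝ) ≤ 1 / ((L.card : ℝ) / 2) :=
                  one_div_le_one_div_of_le h6 h5
              _ = 2 / (L.card : ℝ) := by
                  rw [one_div_div]
          · rw [if_neg hc]
            split
            · positivity
            · exact le_refl 0
        calc (∑ v ∈ A4,
            (if w ∈ Np pos v ∧ C w = C v then 1 / ((Np pos u ∪ Np pos v).card : ℝ) else 0))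
            ≤ ∑ v ∈ A4, (if v ∈ L then 2 / (L.card : ℝ) else 0) := Finset.sum_le_sum hpt
          _ ≤ ∑ v ∈ Finset.univ, (if v ∈ L then 2 / (L.card : ℝ) else 0) :=
              Finset.sum_le_sum_of_subset_of_nonneg (Finset.subset_univ _)
                (fun v _ _ => by split <;> positivity)
          _ = (L.card : ℝ) * (2 / (L.card : ℝ)) := by
              rw [Finset.sum_ite_mem, Finset.univ_inter, Finset.sum_const, nsmul_eq_mul]
          _ = 2 := by field_simp
          _ ≤ max 2 (2 * M / p) := le_max_left _ _
    have hWbM : ((Wb.card : ℕ) : ℝ) ≤ M := by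
      have hsub : Wb ⊆ disSet pos C u := by
        intro w hw
        rw [hWbdef, Finset.mem_filter, mem_Np_iff] at hw
        rw [mem_disSet]
        exact ⟨fun h => hw.2 (by rw [h]), Or.inl ⟨hw.1, fun h => hw.2 h.symm⟩⟩
      calc ((Wb.card : ℕ) : ℝ) ≤ ((disSet pos C u).card : ℝ) := by
            exact_mod_cast Finset.card_le_card hsub
        _ = ((yC pos C u : ℕ) : ℝ) := by rw [yC_eq_card]
        _ ≤ M := hyM u
    have hWbp : ((Wb.card : ℕ) : ℝ) ≤ p := by
      rw [hpdef, hWbdef]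
      exact_mod_cast Finset.card_le_card (Finset.filter_subset _ _)
    have hS2 : (∑ w ∈ Np pos u, ∑ v ∈ A4,
        (if w ∈ Np pos v ∧ C w = C v then 1 / ((Np pos u ∪ Np pos v).card : ℝ) else 0))
        ≤ 2 * M := by
      rw [hsplitW]
      calc _ ≤ Wb.card • max 2 (2 * M / p) := Finset.sum_le_card_nsmul _ _ _ hinner
        _ = ((Wb.card : ℕ) : ℝ) * max 2 (2 * M / p) := nsmul_eq_mul _ _
        _ ≤ 2 * M := by
            rcases le_total (2 * M / p) 2 with h | h
            · rw [max_eq_left h]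
              linarith
            · rw [max_eq_right h]
              have h0 : (0:ℝ) ≤ 2 * M / p := by positivity
              calc ((Wb.card : ℕ) : ℝ) * (2 * M / p) ≤ p * (2 * M / p) :=
                    mul_le_mul_of_nonneg_right hWbp h0
                _ = 2 * M := by field_simp
    rw [hS]
    linarith
  rw [hsplit]
  linarith

end AuxFC

/-- the fractional cost of the correlation metric at each vertex is at
most `8 · max_z y_C(z)` for every clustering, in particular at most `8 · OPT`. -/
theorem fractional_cost_le
    {V : Type*} [Fintype V] [DecidableEq V] (pos : V → V → Bool)
    (hsymm : ∀ u v, pos u v = pos v u) (hrefl : ∀ u, pos u u = true)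
    (u : V) :
    ((∑ v, dhat pos u v) =
      (∑ v ∈ Np pos u, corrDist pos u v) + ∑ v ∈ Nm pos u, (1 - corrDist pos u v)) ∧
    (∀ C : V → ℕ,
      (∑ v, dhat pos u v) ≤ 8 * ((Finset.univ.sup (yC pos C) : ℕ) : ℝ)) ∧
    (∑ v, dhat pos u v) ≤ 8 * (OPT pos : ℝ) := by
  classical
  have hNp : Finset.univ.filter (fun v => pos u v = true) = Np pos u := by
    ext x; simp [Np]
  have hNm : Finset.univ.filter (fun v => ¬ pos u v = true) = Nm pos u := by
    ext x; simp [Nm]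
  refine ⟨?_, fun C => main_bound pos hsymm hrefl u C, ?_⟩
  · rw [← Finset.sum_filter_add_sum_filter_not Finset.univ (fun v => pos u v = true)
      (dhat pos u), hNp, hNm]
    congr 1
    · refine Finset.sum_congr rfl fun v hv => ?_
      rw [mem_Np_iff] at hv
      simp [dhat, hv]
    · refine Finset.sum_congr rfl fun v hv => ?_
      have h : ¬ pos u v = true := by simpa [Nm] using hv
      simp [dhat, h]
  · have hne : { k : ℕ | ∃ C : V → ℕ, k = Finset.univ.sup (yC pos C) }.Nonempty :=
      ⟨Finset.univ.sup (yC pos (fun _ => 0)), ⟨fun _ => 0, rfl⟩⟩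
    obtain ⟨C₀, hC₀⟩ := Nat.sInf_mem hne
    have hOPT : OPT pos = Finset.univ.sup (yC pos C₀) := by
      rw [OPT]
      exact hC₀
    rw [hOPT]
    exact main_bound pos hsymm hrefl u C₀
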